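/- Let m be even. The uniform average over all permutations π of [m] of the measures P̂_{m,π} equals the (m/2)-out-of-m measure: for every ω ∈ {0,1}^m, (1/m!) Σ_π P̂_{m,π}(ω) = P_{m/2,m}(ω). -/

import Mathlib

open scoped Classical

/-- The cylinder `[ω]_S`: all configurations agreeing with `ω` on `S`. -/
def cyl {ι : Type*} (ω : ι → Bool) (S : Finset ι) : Set (ι → Bool) :=
  {α | ∀ i ∈ S, α i = ω i}

/-- Disjoint occurrence `A □ B`. -/
def boxOp {ι : Type*} (A B : Set (ι → Bool)) : Set (ι → Bool) :=
  {ω | ∃ K L : Finset ι, Disjoint K L ∧ cyl ω K ⊆ A ∧ cyl ω L ⊆ B}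

/-- An increasing event. -/
def IsIncreasing {ι : Type*} (A : Set (ι → Bool)) : Prop :=
  ∀ ⦃ω ω' : ι → Bool⦄, ω ∈ A → (∀ i, ω i ≤ ω' i) → ω' ∈ A

/-- Number of coordinates equal to 1 (`true`). -/
def ones {ι : Type*} [Fintype ι] (ω : ι → Bool) : ℕ :=
  (Finset.univ.filter fun i => ω i = true).card

/-- The probability of an event `A` under the weight function `μ`. -/
noncomputable def mass {ι : Type*} [Fintype ι] [DecidableEq ι]
    (μ : (ι → Bool) → ℝ) (A : Set (ι → Bool)) : ℝ :=
  ∑ ω : ι → Bool, if ω ∈ A then μ ω else 0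

/-- The uniform probability weight on a set `S` of configurations, `0` elsewhere. -/
noncomputable def uniformOn {ι : Type*} (S : Set (ι → Bool)) : (ι → Bool) → ℝ :=
  fun ω => if ω ∈ S then ((S.ncard : ℝ))⁻¹ else 0

/-- The `k`-out-of-`n` measure: uniform on configurations with exactly `k` ones. -/
noncomputable def kOutOf (n k : ℕ) : (Fin n → Bool) → ℝ :=
  uniformOn {ω : Fin n → Bool | ones ω = k}

/-- Coordinatewise flip `ω̄`. -/
def flipC {ι : Type*} (ω : ι → Bool) : ι → Bool := fun i => !ω i

/-- `Ω̂_{m,π}`: configurations `ω` such that for each pair of indices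
`(π(2j), π(2j+1))` (0-based), the values `(ω_{π(2j)}, ω_{π(2j+1)})` are `(0,1)` or `(1,0)`. -/
def hatOmegaPerm (m : ℕ) (π : Equiv.Perm (Fin m)) : Set (Fin m → Bool) :=
  {ω | ∀ j : ℕ, ∀ h : 2 * j + 1 < m, ω (π ⟨2 * j, by omega⟩) ≠ ω (π ⟨2 * j + 1, h⟩)}


noncomputable def permFiberEquiv {m : ℕ} (ω α : Fin m → Bool) :
    {π : Equiv.Perm (Fin m) // ω ∘ π = α} ≃
      (({i // α i = true} ≃ {i // ω i = true}) ×
       ({i // ¬ α i = true} ≃ {i // ¬ ω i = true})) where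
  toFun π := ⟨Equiv.subtypeEquiv π.1 fun i => by rw [← congrFun π.2 i]; rfl,
              Equiv.subtypeEquiv π.1 fun i => not_congr (by rw [← congrFun π.2 i]; rfl)⟩
  invFun fg :=
    ⟨(Equiv.sumCompl (fun i => α i = true)).symm.trans
      ((fg.1.sumCongr fg.2).trans (Equiv.sumCompl (fun i => ω i = true))), by
      funext i
      by_cases h : α i = true
      · have e1 : (Equiv.sumCompl fun i => α i = true).symm i = Sum.inl ⟨i, h⟩ :=
          Equiv.sumCompl_symm_apply_of_pos (p := fun i => α i = true) (a := i) h
        simp [e1, h, (fg.1 ⟨i, h⟩).2]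
      · have e1 : (Equiv.sumCompl fun i => α i = true).symm i = Sum.inr ⟨i, h⟩ :=
          Equiv.sumCompl_symm_apply_of_neg (p := fun i => α i = true) (a := i) h
        simp only [Function.comp_apply, Equiv.trans_apply, e1, Equiv.sumCongr_apply,
          Sum.map_inr, Equiv.sumCompl_apply_inr]
        rw [Bool.eq_false_iff.2 h, Bool.eq_false_iff.2 (fg.2 ⟨i, h⟩).2]⟩
  left_inv π := by
    apply Subtype.ext
    apply Equiv.ext
    intro i
    by_cases h : α i = true
    · have e1 : (Equiv.sumCompl fun i => α i = true).symm i = Sum.inl ⟨i, h⟩ :=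
        Equiv.sumCompl_symm_apply_of_pos (p := fun i => α i = true) (a := i) h
      simp [e1]
    · have e1 : (Equiv.sumCompl fun i => α i = true).symm i = Sum.inr ⟨i, h⟩ :=
        Equiv.sumCompl_symm_apply_of_neg (p := fun i => α i = true) (a := i) h
      simp [e1]
  right_inv fg := by
    ext ⟨i, h⟩
    · have e1 : (Equiv.sumCompl fun i => α i = true).symm i = Sum.inl ⟨i, h⟩ :=
        Equiv.sumCompl_symm_apply_of_pos (p := fun i => α i = true) (a := i) h
      simp [e1]
    · have e1 : (Equiv.sumCompl fun i => α i = true).symm i = Sum.inr ⟨i, h⟩ :=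
        Equiv.sumCompl_symm_apply_of_neg (p := fun i => α i = true) (a := i) h
      simp [e1]

lemma ones_comp_perm {m : ℕ} (ω : Fin m → Bool) (π : Equiv.Perm (Fin m)) :
    ones (ω ∘ π) = ones ω := by
  simp only [ones]
  rw [← Fintype.card_subtype, ← Fintype.card_subtype]
  exact Fintype.card_congr (Equiv.subtypeEquiv π (fun i => Iff.rfl))

lemma card_level (m k : ℕ) : {ω : Fin m → Bool | ones ω = k}.ncard = m.choose k := by
  rw [← Nat.card_coe_set_eq]
  have e : {ω : Fin m → Bool // ones ω = k} ≃ {s : Finset (Fin m) // s.card = k} := {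
    toFun := fun ω => ⟨Finset.univ.filter fun i => ω.1 i = true, by simpa [ones] using ω.2⟩
    invFun := fun s => ⟨fun i => decide (i ∈ s.1), by
      simpa [ones, Finset.filter_univ_mem] using s.2⟩
    left_inv := fun ω => by
      apply Subtype.ext; funext i
      by_cases h : ω.1 i = true <;> simp [h]
    right_inv := fun s => by
      apply Subtype.ext; ext i; simp }
  have h1 : Nat.card ↑{ω : Fin m → Bool | ones ω = k} = Nat.card {s : Finset (Fin m) // s.card = k} :=
    Nat.card_congr e
  rw [h1, Nat.card_eq_fintype_card, Fintype.card_finset_len]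
  simp

lemma card_perm_fiber {m : ℕ} (ω α : Fin m → Bool) (h : ones ω = ones α) :
    (Finset.univ.filter fun π : Equiv.Perm (Fin m) => ω ∘ π = α).card =
      (ones ω).factorial * (m - ones ω).factorial := by
  have cωt : Fintype.card {i // ω i = true} = ones ω := by
    rw [Fintype.card_subtype]; rfl
  have cαt : Fintype.card {i // α i = true} = ones ω := by
    rw [Fintype.card_subtype]; exact h.symm ▸ rfl
  have cωf : Fintype.card {i // ¬ ω i = true} = m - ones ω := by
    rw [Fintype.card_subtype_compl, cωt]; simp
  have cαf : Fintype.card {i // ¬ α i = true} = m - ones ω := by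
    rw [Fintype.card_subtype_compl, cαt]; simp
  rw [← Fintype.card_subtype]
  rw [Fintype.card_congr (permFiberEquiv ω α), Fintype.card_prod,
    Fintype.card_equiv (Fintype.equivOfCardEq (cαt.trans cωt.symm)),
    Fintype.card_equiv (Fintype.equivOfCardEq (cαf.trans cωf.symm)), cαt, cαf]


lemma bool_not_of_ne {a b : Bool} (h : a ≠ b) : !a = b := by
  cases a <;> cases b <;> simp_all

lemma mem_hatOmega_iff {m : ℕ} (π : Equiv.Perm (Fin m)) (ω : Fin m → Bool) :
    ω ∈ hatOmegaPerm m π ↔ ω ∘ π ∈ hatOmegaPerm m 1 := by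
  simp only [hatOmegaPerm, Set.mem_setOf_eq, Equiv.Perm.coe_one, id_eq, Function.comp_apply]

lemma ncard_hatOmega {m : ℕ} (π : Equiv.Perm (Fin m)) :
    (hatOmegaPerm m π).ncard = (hatOmegaPerm m 1).ncard := by
  have hpre : hatOmegaPerm m π = (fun α : Fin m → Bool => α ∘ π) ⁻¹' (hatOmegaPerm m 1) :=
    Set.ext fun ω => mem_hatOmega_iff π ω
  have him : hatOmegaPerm m π = (fun α : Fin m → Bool => α ∘ ⇑π.symm) '' (hatOmegaPerm m 1) := by
    rw [hpre]
    ext α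
    constructor
    · intro h
      exact ⟨α ∘ ⇑π, h, by funext i; simp⟩
    · rintro ⟨β, hβ, rfl⟩
      show (β ∘ ⇑π.symm) ∘ ⇑π ∈ hatOmegaPerm m 1
      have hc : (β ∘ ⇑π.symm) ∘ ⇑π = β := by funext i; simp
      rw [hc]; exact hβ
  rw [him]
  apply Set.ncard_image_of_injective
  intro g1 g2 h
  funext i
  have := congrFun h (π i)
  simpa using this

lemma ones_of_mem_hatOne {m n : ℕ} (hn : m = n + n) {α : Fin m → Bool}
    (hα : α ∈ hatOmegaPerm m 1) : ones α = n := by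
  set g : Fin m → Fin m := fun i =>
    if h : i.val % 2 = 0 then ⟨i.val + 1, by omega⟩ else ⟨i.val - 1, by omega⟩ with hg
  have key : ∀ i : Fin m, α (g i) ≠ α i := by
    intro i
    by_cases h : i.val % 2 = 0
    · have h2 : 2 * (i.val / 2) + 1 < m := by omega
      have h3 := hα (i.val / 2) h2
      simp only [Equiv.Perm.coe_one, id_eq] at h3
      have e1 : (⟨2 * (i.val / 2), by omega⟩ : Fin m) = i := Fin.ext (by first | (simp; omega) | simp | omega)
      have e2 : (⟨2 * (i.val / 2) + 1, h2⟩ : Fin m) = g i := by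
        simp only [hg, dif_pos h]; exact Fin.ext (by first | (simp; omega) | simp | omega)
      rw [e1, e2] at h3
      exact h3.symm
    · have h2 : 2 * (i.val / 2) + 1 < m := by omega
      have h3 := hα (i.val / 2) h2
      simp only [Equiv.Perm.coe_one, id_eq] at h3
      have e2 : (⟨2 * (i.val / 2) + 1, h2⟩ : Fin m) = i := Fin.ext (by first | (simp; omega) | simp | omega)
      have e1 : (⟨2 * (i.val / 2), by omega⟩ : Fin m) = g i := by
        simp only [hg, dif_neg h]; exact Fin.ext (by first | (simp; omega) | simp | omega)
      rw [e1, e2] at h3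
      exact h3
  have hgg : ∀ i : Fin m, g (g i) = i := by
    intro i
    by_cases h : i.val % 2 = 0
    · have h1 : g i = ⟨i.val + 1, by omega⟩ := by simp only [hg, dif_pos h]
      rw [h1]
      have h2 : ¬ ((⟨i.val + 1, by omega⟩ : Fin m).val % 2 = 0) := by simp; omega
      simp only [hg, dif_neg h2]
      exact Fin.ext (by simp)
    · have h1 : g i = ⟨i.val - 1, by omega⟩ := by simp only [hg, dif_neg h]
      rw [h1]
      have h2 : (⟨i.val - 1, by omega⟩ : Fin m).val % 2 = 0 := by simp; omega
      simp only [hg, dif_pos h2]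
      exact Fin.ext (by first | (simp; omega) | simp | omega)
  have hcard : (Finset.univ.filter fun i => α i = true).card =
      (Finset.univ.filter fun i => ¬ (α i = true)).card := by
    apply Finset.card_nbij' g g
    · intro i hi
      simp only [Finset.mem_coe, Finset.mem_filter, Finset.mem_univ, true_and] at hi ⊢
      intro hcontra
      exact key i (hcontra.trans hi.symm)
    · intro i hi
      simp only [Finset.mem_coe, Finset.mem_filter, Finset.mem_univ, true_and] at hi ⊢
      rcases Bool.eq_false_or_eq_true (α (g i)) with h | h
      · exact h
      · exact absurd (h.trans (Bool.eq_false_iff.2 hi).symm) (key i)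
    · intro i _; exact hgg i
    · intro i _; exact hgg i
  have htotal := Finset.card_filter_add_card_filter_not
    (s := (Finset.univ : Finset (Fin m))) (fun i => α i = true)
  have hones : ones α = (Finset.univ.filter fun i => α i = true).card := rfl
  rw [hones]
  simp only [Finset.card_univ, Fintype.card_fin] at htotal
  omega

lemma ncard_hatOne {m n : ℕ} (hn : m = n + n) : (hatOmegaPerm m 1).ncard = 2 ^ n := by
  rw [← Nat.card_coe_set_eq]
  have e : ↥(hatOmegaPerm m 1) ≃ (Fin n → Bool) := {
    toFun := fun α => fun j => α.1 ⟨2 * j.val, by omega⟩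
    invFun := fun c => ⟨fun i =>
        if i.val % 2 = 0 then c ⟨i.val / 2, by omega⟩ else !c ⟨i.val / 2, by omega⟩, by
      intro j h
      simp only [Equiv.Perm.coe_one, id_eq]
      simp only [show 2 * j % 2 = 0 by omega, show ¬ (2 * j + 1) % 2 = 0 by omega, ↓reduceIte]
      have key : ∀ x y : Fin n, x = y → c x ≠ !(c y) := by
        rintro x y rfl; simp
      exact key _ _ (Fin.ext (by first | (simp; omega) | simp | omega))⟩
    left_inv := fun α => by
      apply Subtype.ext
      funext i
      by_cases h : i.val % 2 = 0
      · simp only [if_pos h]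
        exact congrArg α.1 (Fin.ext (by first | (simp; omega) | simp | omega))
      · simp only [if_neg h]
        have h2 : 2 * (i.val / 2) + 1 < m := by omega
        have h3 := α.2 (i.val / 2) h2
        simp only [Equiv.Perm.coe_one, id_eq] at h3
        have e2 : (⟨2 * (i.val / 2) + 1, h2⟩ : Fin m) = i := Fin.ext (by first | (simp; omega) | simp | omega)
        rw [e2] at h3
        rcases Bool.eq_false_or_eq_true (α.1 i) with h4 | h4 <;> rw [h4] at h3 ⊢ <;>
          simp_all
    right_inv := fun c => by
      funext j
      simp only []
      rw [if_pos (by first | (simp; omega) | simp | omega)]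
      exact congrArg c (Fin.ext (by first | (simp; omega) | simp | omega)) }
  rw [Nat.card_congr e]
  simp [Nat.card_eq_fintype_card]

/-- The uniform average over all permutations `π` of the measures `P̂_{m,π}` is the
`(m/2)`-out-of-`m` measure. -/
theorem average_hat_perm_eq_half_out_of_m (m : ℕ) (hm : Even m) (ω : Fin m → Bool) :
    (m.factorial : ℝ)⁻¹ * ∑ π : Equiv.Perm (Fin m), uniformOn (hatOmegaPerm m π) ω =
      kOutOf m (m / 2) ω := by
  obtain ⟨n, hn⟩ := hm
  have hm2 : m / 2 = n := by omega
  set E := hatOmegaPerm m 1 with hE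
  have hEcard : E.ncard = 2 ^ n := ncard_hatOne hn
  have huni : ∀ π : Equiv.Perm (Fin m),
      uniformOn (hatOmegaPerm m π) ω = uniformOn E (ω ∘ π) := by
    intro π
    simp only [uniformOn]
    rw [ncard_hatOmega π]
    exact if_congr (mem_hatOmega_iff π ω) rfl rfl
  have hsum : ∑ π : Equiv.Perm (Fin m), uniformOn (hatOmegaPerm m π) ω
      = ((Finset.univ.filter fun π : Equiv.Perm (Fin m) => ω ∘ π ∈ E).card : ℝ)
          * ((2 ^ n : ℝ))⁻¹ := by
    rw [Finset.sum_congr rfl fun π _ => huni π]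
    have h2 : ∀ π : Equiv.Perm (Fin m),
        uniformOn E (ω ∘ π) = if ω ∘ π ∈ E then ((2 ^ n : ℝ))⁻¹ else 0 := by
      intro π
      simp only [uniformOn, hEcard]
      norm_cast
    rw [Finset.sum_congr rfl fun π _ => h2 π, Finset.sum_ite, Finset.sum_const,
      Finset.sum_const_zero, add_zero, nsmul_eq_mul]
  by_cases hω : ones ω = n
  · have hmem : ω ∈ {ω : Fin m → Bool | ones ω = m / 2} := by
      simp only [Set.mem_setOf_eq, hω, hm2]
    have hk : kOutOf m (m / 2) ω = ((m.choose n : ℝ))⁻¹ := by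
      simp only [kOutOf, uniformOn, card_level, hm2]
      rw [if_pos]
      simpa using hω
    have hcount : (Finset.univ.filter fun π : Equiv.Perm (Fin m) => ω ∘ π ∈ E).card
        = 2 ^ n * (n.factorial * n.factorial) := by
      have hfw := Finset.card_eq_sum_card_fiberwise
        (f := fun π : Equiv.Perm (Fin m) => ω ∘ ⇑π)
        (s := Finset.univ.filter fun π : Equiv.Perm (Fin m) => ω ∘ ⇑π ∈ E)
        (t := E.toFinset)
        (fun π hπ => by simpa using (Finset.mem_filter.1 hπ).2)
      rw [hfw]
      have hterm : ∀ α ∈ E.toFinset,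
          (Finset.filter (fun a : Equiv.Perm (Fin m) =>
              (fun π : Equiv.Perm (Fin m) => ω ∘ ⇑π) a = α)
            (Finset.filter (fun π : Equiv.Perm (Fin m) => ω ∘ ⇑π ∈ E) Finset.univ)).card
            = n.factorial * n.factorial := by
        intro α hα
        have hαE : α ∈ E := by simpa using hα
        have h1 : ones α = n := ones_of_mem_hatOne hn hαE
        have he : (Finset.filter (fun a : Equiv.Perm (Fin m) =>
              (fun π : Equiv.Perm (Fin m) => ω ∘ ⇑π) a = α)
            (Finset.filter (fun π : Equiv.Perm (Fin m) => ω ∘ ⇑π ∈ E) Finset.univ))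
            = Finset.filter (fun π : Equiv.Perm (Fin m) => ω ∘ ⇑π = α) Finset.univ := by
          ext π
          simp only [Finset.mem_filter, Finset.mem_univ, true_and]
          exact ⟨fun h => h.2, fun h => ⟨h ▸ hαE, h⟩⟩
        rw [he, card_perm_fiber ω α (by rw [hω, h1]), hω]
        have hmn : m - n = n := by omega
        rw [hmn]
      rw [Finset.sum_congr rfl hterm, Finset.sum_const]
      have hEt : E.toFinset.card = 2 ^ n := by
        rw [← Set.ncard_eq_toFinset_card']
        exact hEcard
      rw [hEt, smul_eq_mul]
    rw [hsum, hcount, hk]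
    have hfac : (m.choose n) * (n.factorial * n.factorial) = m.factorial := by
      have h1 := Nat.choose_mul_factorial_mul_factorial (show n ≤ m by omega)
      have h2 : m - n = n := by omega
      rw [h2] at h1
      rw [← h1]
      ring
    have hne1 : (m.factorial : ℝ) ≠ 0 := Nat.cast_ne_zero.2 m.factorial_ne_zero
    have hne2 : ((m.choose n : ℕ) : ℝ) ≠ 0 :=
      Nat.cast_ne_zero.2 (Nat.choose_pos (show n ≤ m by omega)).ne'
    have hne3 : ((2 : ℝ)) ^ n ≠ 0 := by positivity
    have hfacR : ((m.choose n : ℕ) : ℝ) * ((n.factorial : ℝ) * (n.factorial : ℝ))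
        = (m.factorial : ℝ) := by
      exact_mod_cast congrArg (fun x : ℕ => (x : ℝ)) hfac
    push_cast
    field_simp
    nlinarith [hfacR]
  · have hzero : ∀ π : Equiv.Perm (Fin m), ω ∘ π ∉ E := by
      intro π hc
      exact hω (by rw [← ones_comp_perm ω π]; exact ones_of_mem_hatOne hn hc)
    have hcz : (Finset.univ.filter fun π : Equiv.Perm (Fin m) => ω ∘ π ∈ E).card = 0 := by
      rw [Finset.card_eq_zero]
      exact Finset.filter_eq_empty_iff.2 fun {π} _ => hzero π
    have hkz : kOutOf m (m / 2) ω = 0 := by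
      simp only [kOutOf, uniformOn]
      rw [if_neg]
      intro hc
      exact hω (by simpa [hm2] using hc)
    rw [hsum, hcz, hkz]
    simp
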